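/- Let R be a commutative ring and N ≥ 1. Let P = R[T_1, …, T_N] be the polynomial ring and Q = R[T_1^{±1}, …, T_N^{±1}] the Laurent polynomial ring, and let e_1, …, e_{N−1} be the elementary symmetric polynomials in T_1, …, T_N. Then the intersection of the ideal of Q generated by e_1, …, e_{N−1} with the subring P equals the ideal of P generated by e_1, …, e_{N−1}. -/

import Mathlib

open MvPolynomial Finset

namespace Stmt6Aux

variable {R : Type*} [CommRing R]

lemma multiset_esymm_cons {A : Type*} [CommRing A] (a : A) (s : Multiset A) (k : ℕ) :
    (a ::ₘ s).esymm (k + 1) = s.esymm (k + 1) + a * s.esymm k := by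
  simp only [Multiset.esymm, Multiset.powersetCard_cons, Multiset.map_add, Multiset.sum_add,
    Multiset.map_map, Function.comp_def, Multiset.prod_cons]
  rw [← Multiset.sum_map_mul_left]

lemma rename_succ_eq_aeval (n : ℕ) (p : MvPolynomial (Fin n) R) :
    rename Fin.succ p = aeval (fun i : Fin n => (X i.succ : MvPolynomial (Fin (n+1)) R)) p := by
  have := MvPolynomial.aeval_rename (R := R)
    (g := (X : Fin (n+1) → MvPolynomial (Fin (n+1)) R)) (k := Fin.succ) (p := p)
  rw [aeval_X_left_apply] at this
  rw [this]; rfl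

lemma esymm_succ (n k : ℕ) :
    esymm (Fin (n+1)) R (k+1) =
      rename Fin.succ (esymm (Fin n) R (k+1)) + X 0 * rename Fin.succ (esymm (Fin n) R k) := by
  have huniv : (Finset.univ : Finset (Fin (n+1))).val.map X
      = (X 0 : MvPolynomial (Fin (n+1)) R) ::ₘ
        ((Finset.univ : Finset (Fin n)).val.map (fun i => X i.succ)) := by
    rw [Fin.univ_succ, Finset.cons_val, Multiset.map_cons, Finset.map_val, Multiset.map_map]
    rfl
  rw [esymm_eq_multiset_esymm, huniv, multiset_esymm_cons,
    rename_succ_eq_aeval, rename_succ_eq_aeval,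
    aeval_esymm_eq_multiset_esymm, aeval_esymm_eq_multiset_esymm]

lemma esymm_card (n : ℕ) :
    esymm (Fin n) R n = ∏ i : Fin n, X i := by
  have h : Finset.powersetCard n (Finset.univ : Finset (Fin n)) = {Finset.univ} := by
    have := Finset.powersetCard_self (Finset.univ : Finset (Fin n))
    simpa using this
  rw [MvPolynomial.esymm, h]
  simp

lemma esymm_isHomogeneous (n k : ℕ) : (esymm (Fin n) R k).IsHomogeneous k := by
  rw [MvPolynomial.esymm]
  apply MvPolynomial.IsHomogeneous.sum
  intro t ht
  have := (Finset.mem_powersetCard.1 ht).2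
  have h := MvPolynomial.IsHomogeneous.prod t (fun i => (X i : MvPolynomial (Fin n) R))
    (fun _ => 1) (fun i _ => isHomogeneous_X _ _)
  simpa [this] using h

/-- evaluation sending `X 0` to `0` and `X i.succ` to `X i`. -/
noncomputable def ev0 (R : Type*) [CommRing R] (n : ℕ) :
    MvPolynomial (Fin (n+1)) R →ₐ[R] MvPolynomial (Fin n) R :=
  aeval (Fin.cases 0 X)

@[simp] lemma ev0_X_zero (n : ℕ) : ev0 R n (X 0) = 0 := by
  simp [ev0]

@[simp] lemma ev0_X_succ (n : ℕ) (i : Fin n) : ev0 R n (X i.succ) = X i := by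
  simp [ev0]

@[simp] lemma ev0_rename (n : ℕ) (p : MvPolynomial (Fin n) R) :
    ev0 R n (rename Fin.succ p) = p := by
  rw [ev0, aeval_rename]
  have : (Fin.cases 0 X ∘ Fin.succ : Fin n → MvPolynomial (Fin n) R) = X := by
    funext i; simp
  rw [this, aeval_X_left_apply]

lemma sub_rename_ev0_mem (n : ℕ) (f : MvPolynomial (Fin (n+1)) R) :
    f - rename Fin.succ (ev0 R n f) ∈ Ideal.span {(X 0 : MvPolynomial (Fin (n+1)) R)} := by
  induction f using MvPolynomial.induction_on with
  | C a => simp [ev0]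
  | add p q hp hq =>
      have : p + q - rename Fin.succ (ev0 R n (p + q))
          = (p - rename Fin.succ (ev0 R n p)) + (q - rename Fin.succ (ev0 R n q)) := by
        simp only [map_add]; ring
      rw [this]; exact Ideal.add_mem _ hp hq
  | mul_X p i hp =>
      refine Fin.cases ?_ ?_ i
      · have : p * X 0 - rename Fin.succ (ev0 R n (p * X 0)) = p * X 0 := by simp
        rw [this]
        exact Ideal.mul_mem_left _ _ (Ideal.subset_span rfl)
      · intro j
        have : p * X j.succ - rename Fin.succ (ev0 R n (p * X j.succ))
            = (p - rename Fin.succ (ev0 R n p)) * X j.succ := by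
          simp only [map_mul, ev0_X_succ, rename_X]; ring
        rw [this]
        exact Ideal.mul_mem_right _ _ hp

lemma X_mul_injective {σ : Type*} (i : σ) :
    Function.Injective (fun f : MvPolynomial σ R => X i * f) := by
  intro f g h
  ext m
  have := congrArg (MvPolynomial.coeff (Finsupp.single i 1 + m)) h
  simpa [MvPolynomial.coeff_X_mul] using this

lemma degree_add (a b : σ →₀ ℕ) : (a + b).degree = a.degree + b.degree := by
  simp [Finsupp.degree_eq_weight_one, map_add]

lemma hcomp_mul_zero {h : MvPolynomial σ R} {j : ℕ} (hh : h.IsHomogeneous j)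
    (g : MvPolynomial σ R) {d : ℕ} (hd : d < j) :
    homogeneousComponent d (h * g) = 0 := by
  classical
  apply homogeneousComponent_eq_zero'
  intro m hm
  obtain ⟨m₁, hm₁, m₂, hm₂, rfl⟩ := Finset.mem_add.1 (MvPolynomial.support_mul h g hm)
  have h1 : m₁.degree = j := by
    by_contra hne
    exact (MvPolynomial.mem_support_iff.1 hm₁) (hh.coeff_eq_zero hne)
  rw [degree_add, h1]
  omega

lemma hcomp_mul_homog {h : MvPolynomial σ R} {j : ℕ} (hh : h.IsHomogeneous j)
    (g : MvPolynomial σ R) (d : ℕ) :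
    homogeneousComponent (j + d) (h * g) = h * homogeneousComponent d g := by
  classical
  conv_lhs => rw [← MvPolynomial.sum_homogeneousComponent g]
  rw [Finset.mul_sum, map_sum]
  have key : ∀ i, homogeneousComponent (j + d) (h * homogeneousComponent i g)
      = if d = i then h * homogeneousComponent i g else 0 := by
    intro i
    have hmem : h * homogeneousComponent i g ∈ homogeneousSubmodule σ R (j + i) :=
      (mem_homogeneousSubmodule _ _).2 (hh.mul (homogeneousComponent_isHomogeneous i g))
    rw [homogeneousComponent_of_mem hmem]
    simp [Nat.add_right_cancel_iff, Nat.add_left_cancel_iff]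
  simp_rw [key]
  rw [Finset.sum_ite_eq (Finset.range (g.totalDegree + 1)) d
    (fun i => h * homogeneousComponent i g)]
  by_cases hd : d ∈ Finset.range (g.totalDegree + 1)
  · rw [if_pos hd]
  · rw [if_neg hd]
    have hlt : g.totalDegree < d := by
      simp only [Finset.mem_range, not_lt] at hd; omega
    rw [homogeneousComponent_eq_zero d g hlt, mul_zero]

lemma hcomp_mem_span {S : Set (MvPolynomial σ R)}
    (hS : ∀ s ∈ S, ∃ j, MvPolynomial.IsHomogeneous s j)
    {f : MvPolynomial σ R} (hf : f ∈ Ideal.span S) (d : ℕ) :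
    homogeneousComponent d f ∈ Ideal.span S := by
  classical
  rw [Ideal.span] at hf
  obtain ⟨c, hsupp, rfl⟩ := Submodule.mem_span_set.1 hf
  rw [Finsupp.sum, map_sum]
  apply Ideal.sum_mem
  intro s hs
  have hsS : s ∈ S := hsupp hs
  obtain ⟨j, hj⟩ := hS s hsS
  rw [smul_eq_mul, mul_comm]
  rcases lt_or_ge d j with hd | hd
  · rw [hcomp_mul_zero hj _ hd]
    exact Ideal.zero_mem _
  · obtain ⟨d', rfl⟩ : ∃ d', d = j + d' := ⟨d - j, by omega⟩
    rw [hcomp_mul_homog hj]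
    exact Ideal.mul_mem_right _ _ (Ideal.subset_span hsS)

lemma swap_reg {S : Set (MvPolynomial σ R)}
    (hS : ∀ s ∈ S, ∃ j, MvPolynomial.IsHomogeneous s j)
    {x y : MvPolynomial σ R} {e : ℕ} (he : 1 ≤ e) (hx : x.IsHomogeneous e)
    (hregx : ∀ f, x * f ∈ Ideal.span S → f ∈ Ideal.span S)
    (hregy : ∀ f, y * f ∈ Ideal.span S ⊔ Ideal.span {x} →
      f ∈ Ideal.span S ⊔ Ideal.span {x}) :
    (∀ f, y * f ∈ Ideal.span S → f ∈ Ideal.span S) ∧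
      (∀ f, x * f ∈ Ideal.span S ⊔ Ideal.span {y} →
        f ∈ Ideal.span S ⊔ Ideal.span {y}) := by
  set I := Ideal.span S with hI
  have claim : ∀ (k : ℕ) (g : MvPolynomial σ R), y * g ∈ I →
      ∃ t, y * t ∈ I ∧ g - x ^ k * t ∈ I := by
    intro k
    induction k with
    | zero => intro g hg; exact ⟨g, hg, by simp⟩
    | succ k ih =>
        intro g hg
        obtain ⟨t, hyt, hgt⟩ := ih g hg
        have ht : t ∈ I ⊔ Ideal.span {x} := hregy t (Ideal.mem_sup_left hyt)
        obtain ⟨i, hi, u, hu, rfl⟩ := Submodule.mem_sup.1 ht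
        obtain ⟨a, rfl⟩ := Ideal.mem_span_singleton'.1 hu
        have hya : y * a ∈ I := by
          have h1 : y * (a * x) ∈ I := by
            have : y * (a * x) = y * (i + a * x) - y * i := by ring
            rw [this]
            exact Ideal.sub_mem _ hyt (Ideal.mul_mem_left _ _ hi)
          have h2 : x * (y * a) ∈ I := by
            rw [show x * (y * a) = y * (a * x) by ring]; exact h1
          exact hregx _ h2
        refine ⟨a, hya, ?_⟩
        have : g - x ^ (k+1) * a = (g - x ^ k * (i + a * x)) + x ^ k * i := by ring
        rw [this]
        exact Ideal.add_mem _ hgt (Ideal.mul_mem_left _ _ hi)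
  have part1 : ∀ f, y * f ∈ I → f ∈ I := by
    intro f hf
    rw [← MvPolynomial.sum_homogeneousComponent f]
    apply Ideal.sum_mem
    intro d _
    obtain ⟨t, _, hft⟩ := claim (d + 1) f hf
    have hd : d < e * (d + 1) := by
      calc d < d + 1 := Nat.lt_succ_self d
        _ ≤ e * (d + 1) := Nat.le_mul_of_pos_left _ he
    have : homogeneousComponent d f
        = homogeneousComponent d (f - x ^ (d+1) * t)
          + homogeneousComponent d (x ^ (d+1) * t) := by
      rw [← map_add]; congr 1; ring
    rw [this, hcomp_mul_zero (hx.pow (d+1)) t hd, add_zero]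
    exact hcomp_mem_span hS hft d
  refine ⟨part1, ?_⟩
  intro f hf
  obtain ⟨i, hi, u, hu, heq⟩ := Submodule.mem_sup.1 hf
  obtain ⟨g, rfl⟩ := Ideal.mem_span_singleton'.1 hu
  have hyg : y * g ∈ I ⊔ Ideal.span {x} := by
    have : g * y = x * f - i := by rw [← heq]; ring
    rw [mul_comm, this]
    refine Submodule.sub_mem _ ?_ (Ideal.mem_sup_left hi)
    exact Ideal.mem_sup_right (Ideal.mul_mem_right _ _ (Ideal.subset_span rfl))
  obtain ⟨i', hi', u', hu', heq'⟩ := Submodule.mem_sup.1 (hregy g hyg)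
  obtain ⟨t, rfl⟩ := Ideal.mem_span_singleton'.1 hu'
  have hx2 : x * (f - y * t) ∈ I := by
    have : x * (f - y * t) = i + y * i' := by
      have hg : g = i' + t * x := heq'.symm
      have := heq.symm
      rw [hg] at this
      -- x * f = i + y * (i' + t * x)
      calc x * (f - y * t) = x * f - y * (t * x) := by ring
        _ = (i + (i' + t * x) * y) - y * (t * x) := by rw [← this]
        _ = i + y * i' := by ring
    rw [this]
    exact Ideal.add_mem _ hi (Ideal.mul_mem_left _ _ hi')
  have := hregx _ hx2
  have hfin : f = (f - y * t) + y * t := by ring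
  rw [hfin]
  exact Submodule.add_mem _ (Ideal.mem_sup_left this)
    (Ideal.mem_sup_right (Ideal.mul_mem_right _ _ (Ideal.subset_span rfl)))

/-- the generating set `{e_1, …, e_k}`. -/
def genset (R : Type*) [CommRing R] (n k : ℕ) : Set (MvPolynomial (Fin n) R) :=
  (fun j => esymm (Fin n) R j) '' Set.Icc 1 k

noncomputable def Jn (R : Type*) [CommRing R] (n k : ℕ) : Ideal (MvPolynomial (Fin n) R) :=
  Ideal.span (genset R n k)

lemma genset_homog (n k : ℕ) : ∀ s ∈ genset R n k, ∃ j, MvPolynomial.IsHomogeneous s j := by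
  rintro s ⟨j, _, rfl⟩; exact ⟨j, esymm_isHomogeneous n j⟩

lemma esymm_mem_Jn {n j k : ℕ} (h1 : 1 ≤ j) (h2 : j ≤ k) : esymm (Fin n) R j ∈ Jn R n k :=
  Ideal.subset_span ⟨j, ⟨h1, h2⟩, rfl⟩

lemma Jn_zero (n : ℕ) : Jn R n 0 = ⊥ := by
  rw [Jn, genset, Set.Icc_eq_empty (by omega), Set.image_empty, Ideal.span_empty]

lemma Jn_succ (n k : ℕ) :
    Jn R n (k+1) = Jn R n k ⊔ Ideal.span {esymm (Fin n) R (k+1)} := by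
  have h : Set.Icc 1 (k+1) = insert (k+1) (Set.Icc 1 k) := by
    ext j; simp only [Set.mem_Icc, Set.mem_insert_iff]; omega
  rw [Jn, genset, h, Set.image_insert_eq, Ideal.span_insert, sup_comm, Jn, genset]

lemma ev0_esymm (n : ℕ) {j : ℕ} (hj : 1 ≤ j) :
    ev0 R n (esymm (Fin (n+1)) R j) = esymm (Fin n) R j := by
  obtain ⟨m, rfl⟩ : ∃ m, j = m + 1 := ⟨j - 1, by omega⟩
  rw [esymm_succ, map_add, map_mul, ev0_X_zero, zero_mul, add_zero, ev0_rename]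

lemma ev0_mem {n k : ℕ} {f : MvPolynomial (Fin (n+1)) R}
    (hf : f ∈ Jn R (n+1) k ⊔ Ideal.span {X 0}) : ev0 R n f ∈ Jn R n k := by
  have h1 : ev0 R n f ∈ Ideal.map (ev0 R n).toRingHom (Jn R (n+1) k ⊔ Ideal.span {X 0}) :=
    Ideal.mem_map_of_mem _ hf
  refine Ideal.map_le_iff_le_comap.2 ?_ h1
  rw [sup_le_iff]
  constructor
  · rw [Jn, Ideal.span_le]
    rintro s ⟨j, ⟨hj1, hj2⟩, rfl⟩
    simp only [SetLike.mem_coe, Ideal.mem_comap, AlgHom.toRingHom_eq_coe, RingHom.coe_coe]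
    rw [ev0_esymm n hj1]
    exact esymm_mem_Jn hj1 hj2
  · rw [Ideal.span_le]
    rintro s rfl
    simp only [Ideal.mem_comap, AlgHom.toRingHom_eq_coe, RingHom.coe_coe, SetLike.mem_coe]
    rw [ev0_X_zero]
    exact Ideal.zero_mem _

lemma rename_mem {n k : ℕ} {g : MvPolynomial (Fin n) R} (hg : g ∈ Jn R n k) :
    rename Fin.succ g ∈ Jn R (n+1) k ⊔ Ideal.span {(X 0 : MvPolynomial (Fin (n+1)) R)} := by
  have h1 : rename Fin.succ g ∈ Ideal.map (rename (R := R) Fin.succ).toRingHom (Jn R n k) :=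
    Ideal.mem_map_of_mem _ hg
  refine Ideal.map_le_iff_le_comap.2 ?_ h1
  rw [Jn, Ideal.span_le]
  rintro s ⟨j, ⟨hj1, hj2⟩, rfl⟩
  simp only [Ideal.mem_comap, AlgHom.toRingHom_eq_coe, RingHom.coe_coe, SetLike.mem_coe]
  obtain ⟨m, rfl⟩ : ∃ m, j = m + 1 := ⟨j - 1, by omega⟩
  have : rename (R := R) Fin.succ (esymm (Fin n) R (m+1))
      = esymm (Fin (n+1)) R (m+1) - X 0 * rename Fin.succ (esymm (Fin n) R m) := by
    rw [esymm_succ]; ring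
  rw [this]
  refine Submodule.sub_mem _ (Ideal.mem_sup_left (esymm_mem_Jn hj1 hj2)) ?_
  exact Ideal.mem_sup_right (Ideal.mul_mem_right _ _ (Ideal.subset_span rfl))

lemma L1 {n : ℕ}
    (hWRn : ∀ k, k + 1 ≤ n → ∀ f, esymm (Fin n) R (k+1) * f ∈ Jn R n k → f ∈ Jn R n k)
    {k : ℕ} (hk : k + 1 ≤ n) (f : MvPolynomial (Fin (n+1)) R)
    (hf : esymm (Fin (n+1)) R (k+1) * f ∈ Jn R (n+1) k ⊔ Ideal.span {X 0}) :
    f ∈ Jn R (n+1) k ⊔ Ideal.span {(X 0 : MvPolynomial (Fin (n+1)) R)} := by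
  have h1 : esymm (Fin n) R (k+1) * ev0 R n f ∈ Jn R n k := by
    have := ev0_mem (R := R) hf
    rwa [map_mul, ev0_esymm n (by omega)] at this
  have h2 : ev0 R n f ∈ Jn R n k := hWRn k hk _ h1
  have h3 := rename_mem (R := R) h2
  have h4 := sub_rename_ev0_mem n f
  have : f = (f - rename Fin.succ (ev0 R n f)) + rename Fin.succ (ev0 R n f) := by ring
  rw [this]
  exact Submodule.add_mem _ (Ideal.mem_sup_right h4) h3

lemma bubble {n : ℕ}
    (hWRn : ∀ k, k + 1 ≤ n → ∀ f, esymm (Fin n) R (k+1) * f ∈ Jn R n k → f ∈ Jn R n k)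
    (m : ℕ) (hm : m ≤ n) :
    (∀ j, j + 1 ≤ m → ∀ f, esymm (Fin (n+1)) R (j+1) * f ∈ Jn R (n+1) j → f ∈ Jn R (n+1) j)
      ∧ (∀ f, X 0 * f ∈ Jn R (n+1) m → f ∈ Jn R (n+1) m) := by
  induction m with
  | zero =>
      refine ⟨by omega, ?_⟩
      intro f hf
      rw [Jn_zero] at hf ⊢
      have : X (0 : Fin (n+1)) * f = X 0 * 0 := by
        simpa using (Ideal.mem_bot.1 hf)
      simpa using X_mul_injective 0 this
  | succ m ih =>
      obtain ⟨ih1, ih2⟩ := ih (by omega)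
      have hswap := swap_reg (R := R) (genset_homog (n+1) m)
        (le_refl 1) (isHomogeneous_X R (0 : Fin (n+1)))
        (by intro f hf; exact ih2 f hf)
        (by intro f hf; exact L1 hWRn (by omega) f hf)
      obtain ⟨p1, p2⟩ := hswap
      constructor
      · intro j hj f hf
        rcases Nat.lt_or_ge (j+1) (m+1) with h | h
        · exact ih1 j (by omega) f hf
        · have hjm : j = m := by omega
          subst hjm
          exact p1 f hf
      · intro f hf
        rw [Jn_succ] at hf ⊢
        exact p2 f hf

lemma rename_equiv_mem {N k : ℕ} (e : Equiv.Perm (Fin N)) {f : MvPolynomial (Fin N) R}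
    (hf : f ∈ Jn R N k) : rename e f ∈ Jn R N k := by
  have h1 : rename (⇑e) f ∈ Ideal.map (rename (R := R) (⇑e)).toRingHom (Jn R N k) :=
    Ideal.mem_map_of_mem _ hf
  refine Ideal.map_le_iff_le_comap.2 ?_ h1
  rw [Jn, genset, Ideal.span_le]
  rintro s ⟨j, ⟨hj1, hj2⟩, rfl⟩
  simp only [SetLike.mem_coe, Ideal.mem_comap, AlgHom.toRingHom_eq_coe, RingHom.coe_coe]
  rw [rename_esymm]
  exact esymm_mem_Jn hj1 hj2

lemma xreg_all {n m : ℕ}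
    (hX0 : ∀ f, X 0 * f ∈ Jn R (n+1) m → f ∈ Jn R (n+1) m) (i : Fin (n+1)) :
    ∀ f, X i * f ∈ Jn R (n+1) m → f ∈ Jn R (n+1) m := by
  intro f hf
  set e := Equiv.swap (0 : Fin (n+1)) i with he
  have h1 : X 0 * rename (⇑e) f ∈ Jn R (n+1) m := by
    have := rename_equiv_mem e hf
    rwa [map_mul, rename_X, he, Equiv.swap_apply_right] at this
  have h2 := hX0 _ h1
  have h3 := rename_equiv_mem e h2
  rw [rename_rename, show ((⇑e) ∘ (⇑e)) = id from funext fun x => Equiv.swap_apply_self _ _ x,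
    rename_id] at h3
  exact h3

lemma prod_reg {N m : ℕ}
    (hX : ∀ (i : Fin N) f, X i * f ∈ Jn R N m → f ∈ Jn R N m) (s : Finset (Fin N)) :
    ∀ f, (∏ i ∈ s, X i) * f ∈ Jn R N m → f ∈ Jn R N m := by
  classical
  induction s using Finset.induction_on with
  | empty => intro f hf; simpa using hf
  | insert _ _ hnotmem ih =>
      intro f hf
      rename_i a s'
      rw [Finset.prod_insert hnotmem, mul_assoc] at hf
      exact ih f (hX a _ hf)

theorem master : ∀ n : ℕ,
    (∀ k, k + 1 ≤ n → ∀ f, esymm (Fin n) R (k+1) * f ∈ Jn R n k → f ∈ Jn R n k)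
      ∧ (∀ (i : Fin n) (f : MvPolynomial (Fin n) R),
          X i * f ∈ Jn R n (n-1) → f ∈ Jn R n (n-1)) := by
  intro n
  induction n with
  | zero => exact ⟨by omega, fun i => i.elim0⟩
  | succ n ih =>
      have hWRn := ih.1
      have bub := bubble hWRn n (le_refl n)
      have hX : ∀ (i : Fin (n+1)) f, X i * f ∈ Jn R (n+1) n → f ∈ Jn R (n+1) n :=
        fun i => xreg_all bub.2 i
      constructor
      · intro k hk f hf
        rcases Nat.lt_or_ge (k+1) (n+1) with h | h
        · exact bub.1 k (by omega) f hf
        · have hkn : k = n := by omega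
          rw [hkn] at hf ⊢
          rw [esymm_card (n+1)] at hf
          exact prod_reg hX Finset.univ f hf
      · simpa using hX

end Stmt6Aux

open Stmt6Aux in
theorem stmt6 (R : Type*) [CommRing R] (N : ℕ) (hN : 1 ≤ N) :
    Ideal.comap
        (algebraMap (MvPolynomial (Fin N) R)
          (Localization (Submonoid.powers
            (∏ i : Fin N, (MvPolynomial.X i : MvPolynomial (Fin N) R)))))
        (Ideal.map
          (algebraMap (MvPolynomial (Fin N) R)
            (Localization (Submonoid.powers
              (∏ i : Fin N, (MvPolynomial.X i : MvPolynomial (Fin N) R)))))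
          (Ideal.span ((fun k => MvPolynomial.esymm (Fin N) R k) '' Set.Icc 1 (N - 1)))) =
      Ideal.span ((fun k => MvPolynomial.esymm (Fin N) R k) '' Set.Icc 1 (N - 1)) := by
  set p : MvPolynomial (Fin N) R := ∏ i : Fin N, X i with hp
  set M := Submonoid.powers p with hM
  have hJ : Ideal.span ((fun k => MvPolynomial.esymm (Fin N) R k) '' Set.Icc 1 (N - 1))
      = Jn R N (N-1) := rfl
  rw [hJ]
  apply le_antisymm
  · intro f hf
    rw [Ideal.mem_comap, IsLocalization.mem_map_algebraMap_iff M] at hf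
    obtain ⟨⟨a, m⟩, hm⟩ := hf
    rw [← map_mul, IsLocalization.eq_iff_exists M] at hm
    obtain ⟨c, hc⟩ := hm
    obtain ⟨k1, hk1⟩ := c.2
    obtain ⟨k2, hk2⟩ := m.2
    have hk1' : p ^ k1 = (c : MvPolynomial (Fin N) R) := hk1
    have hk2' : p ^ k2 = (m : MvPolynomial (Fin N) R) := hk2
    have hpreg : ∀ g, p * g ∈ Jn R N (N-1) → g ∈ Jn R N (N-1) := by
      intro g hg
      rw [hp] at hg
      exact prod_reg (master N).2 Finset.univ g hg
    have key : ∀ (j : ℕ) (g : MvPolynomial (Fin N) R), p ^ j * g ∈ Jn R N (N-1) →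
        g ∈ Jn R N (N-1) := by
      intro j
      induction j with
      | zero => intro g hg; simpa using hg
      | succ j ih =>
          intro g hg
          rw [pow_succ', mul_assoc] at hg
          exact ih _ (by
            have := hpreg (p ^ j * g) ?_
            · exact this
            · exact hg)
    apply key (k1 + k2)
    have : p ^ (k1 + k2) * f = ↑c * (f * ↑m) := by
      rw [pow_add, hk1', hk2']; ring
    rw [this, hc]
    exact Ideal.mul_mem_left _ _ a.2
  · exact Ideal.le_comap_map
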